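/- Let G be a finite group and N a proper subgroup of G (not necessarily normal). Then M'_{G,N} = Σ_{C ≤ N, C cyclic} χ̃(T_C(G,N)) · φ(|C|), where the sum runs over all cyclic subgroups C of N, φ is the Euler totient function, and χ̃(T_C(G,N)) is the reduced Euler characteristic of the order complex of the poset T_C(G,N). -/

import Mathlib

open scoped Classical Pointwise

noncomputable instance (G : Type*) [Group G] [Finite G] : Fintype (Subgroup G) :=
  Fintype.ofFinite _

/-- The Möbius function of the subgroup lattice of a finite group `G`, defined as the
matrix inverse of the zeta matrix whose `(K, D)` entry is `1` if `K ≤ D` and `0` otherwise. -/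
noncomputable def subgroupMu (G : Type*) [Group G] [Finite G] :
    Matrix (Subgroup G) (Subgroup G) ℚ :=
  (Matrix.of fun K D : Subgroup G => if K ≤ D then (1 : ℚ) else 0)⁻¹

/-- `M'_{G,H} = Σ_{X ≤ H} |X| · μ(X, G)` where `μ` is the Möbius function of the subgroup
lattice of `G`. -/
noncomputable def Mprime (G : Type*) [Group G] [Finite G] (H : Subgroup G) : ℚ :=
  ∑ X : Subgroup G, if X ≤ H then (Nat.card X : ℚ) * subgroupMu G X ⊤ else 0

/-- The number of strictly increasing chains `X₀ < X₁ < ⋯ < X_i` of `i+1` elements of a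
set `T` of subgroups of `G`. -/
noncomputable def chainCount (G : Type*) [Group G] (T : Set (Subgroup G)) (i : ℕ) : ℕ :=
  Nat.card {f : Fin (i + 1) → Subgroup G // StrictMono f ∧ ∀ j, f j ∈ T}

/-- The Euler characteristic `χ(T) = Σ_{i ≥ 0} (-1)^i c_i` of the order complex of a poset
`T` of subgroups, where `c_i` is the number of strictly increasing chains of `i+1` elements. -/
noncomputable def eulerChar (G : Type*) [Group G] (T : Set (Subgroup G)) : ℚ :=
  ∑ᶠ i : ℕ, (-1 : ℚ) ^ i * (chainCount G T i : ℚ)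

/-- The reduced Euler characteristic `χ̃(T) = -1 + χ(T)` of the order complex of a poset of
subgroups. -/
noncomputable def reducedEulerChar (G : Type*) [Group G] (T : Set (Subgroup G)) : ℚ :=
  -1 + eulerChar G T

namespace MprimeAux

variable (G : Type*) [Group G] [Finite G]

/-- The zeta matrix of the subgroup lattice. -/
noncomputable def zeta : Matrix (Subgroup G) (Subgroup G) ℚ :=
  Matrix.of fun K D : Subgroup G => if K ≤ D then (1 : ℚ) else 0

lemma subgroupMu_eq : subgroupMu G = (zeta G)⁻¹ := rfl

lemma zeta_blockTriangular :
    (zeta G).BlockTriangular fun X : Subgroup G => Nat.card X := by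
  intro X Y h
  simp only [zeta, Matrix.of_apply, ite_eq_right_iff]
  intro hXY
  exact absurd (Nat.le_of_dvd Nat.card_pos (Subgroup.card_dvd_of_le hXY)) (not_le.mpr h)

lemma zeta_det : (zeta G).det = 1 := by
  rw [(zeta_blockTriangular G).det]
  refine Finset.prod_eq_one fun k _ => ?_
  have h : (zeta G).toSquareBlock (fun X : Subgroup G => Nat.card X) k = 1 := by
    ext X Y
    simp only [Matrix.toSquareBlock_def, zeta, Matrix.of_apply, Matrix.one_apply]
    by_cases hxy : X = Y
    · simp [hxy]
    · have hle : ¬ (X : Subgroup G) ≤ (Y : Subgroup G) := fun hle =>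
        hxy (Subtype.ext (Subgroup.eq_of_le_of_card_ge hle (le_of_eq (Y.2.trans X.2.symm))))
      simp [hxy, hle]
  rw [h, Matrix.det_one]

lemma isUnit_zeta_det : IsUnit (zeta G).det := by
  rw [zeta_det]; exact isUnit_one

lemma zeta_mul_mu : zeta G * subgroupMu G = 1 := by
  rw [subgroupMu_eq]
  exact Matrix.mul_nonsing_inv _ (isUnit_zeta_det G)

lemma mu_rec (X : Subgroup G) :
    (∑ Y : Subgroup G, if X ≤ Y then subgroupMu G Y ⊤ else 0) =
      if X = ⊤ then 1 else 0 := by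
  have h := congrFun (congrFun (zeta_mul_mu G) X) ⊤
  rw [Matrix.mul_apply] at h
  simpa [zeta, Matrix.one_apply, ite_mul, one_mul, zero_mul] using h

/-- Number of chains from `X` to `⊤` with `i+1` elements. -/
noncomputable def cft (X : Subgroup G) (i : ℕ) : ℕ :=
  Nat.card {f : Fin (i + 1) → Subgroup G // StrictMono f ∧ f 0 = X ∧ f (Fin.last i) = ⊤}

lemma strictMono_card_le {i : ℕ} (f : Fin (i + 1) → Subgroup G) (hf : StrictMono f) :
    i + 1 ≤ Fintype.card (Subgroup G) := by
  simpa using Fintype.card_le_of_injective f hf.injective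

lemma cft_eq_zero {X : Subgroup G} {i : ℕ} (h : Fintype.card (Subgroup G) < i + 1) :
    cft G X i = 0 := by
  refine Nat.card_eq_zero.mpr (Or.inl ⟨fun f => ?_⟩)
  exact absurd (strictMono_card_le G f.1 f.2.1) (not_le.mpr h)

lemma chainCount_eq_zero {T : Set (Subgroup G)} {i : ℕ}
    (h : Fintype.card (Subgroup G) < i + 1) : chainCount G T i = 0 := by
  refine Nat.card_eq_zero.mpr (Or.inl ⟨fun f => ?_⟩)
  exact absurd (strictMono_card_le G f.1 f.2.1) (not_le.mpr h)

lemma cft_zero (X : Subgroup G) : cft G X 0 = if X = ⊤ then 1 else 0 := by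
  rcases eq_or_ne X ⊤ with rfl | h
  · rw [if_pos rfl, cft]
    rw [Nat.card_eq_one_iff_unique]
    have hzero : ∀ j : Fin (0 + 1), j = 0 := fun j => Fin.ext (by omega)
    constructor
    · constructor
      rintro ⟨f, _, hf0, _⟩ ⟨g, _, hg0, _⟩
      refine Subtype.ext (funext fun j => ?_)
      show f j = g j
      rw [hzero j, hf0, hg0]
    · refine ⟨⟨fun _ => ⊤, fun a b hab => ?_, rfl, rfl⟩⟩
      rw [hzero a, hzero b] at hab
      exact absurd hab (lt_irrefl _)
  · rw [if_neg h]
    refine Nat.card_eq_zero.mpr (Or.inl ⟨?_⟩)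
    rintro ⟨f, _, hf0, hfl⟩
    exact h (hf0 ▸ (show f 0 = ⊤ from hfl))

lemma zero_lt_one_fin (i : ℕ) : (0 : Fin (i + 2)) < 1 := by
  rw [Fin.lt_def]
  simp

lemma fin_one_eq_succ_zero (i : ℕ) : (1 : Fin (i + 2)) = Fin.succ 0 := by
  ext
  simp [Fin.val_one]

lemma cft_succ (X : Subgroup G) (i : ℕ) :
    cft G X (i + 1) = ∑ Y : Subgroup G, if X < Y then cft G Y i else 0 := by
  have h1 : cft G X (i + 1) = (Finset.univ.filter fun f : Fin (i + 2) → Subgroup G =>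
      StrictMono f ∧ f 0 = X ∧ f (Fin.last (i + 1)) = ⊤).card := by
    rw [cft, Nat.card_eq_fintype_card, Fintype.card_subtype]
  rw [h1, Finset.card_eq_sum_card_fiberwise
    (f := fun f : Fin (i + 2) → Subgroup G => f 1) (t := Finset.univ)
    (fun _ _ => Finset.mem_univ _)]
  refine Finset.sum_congr rfl fun Y _ => ?_
  rw [Finset.filter_filter]
  by_cases hXY : X < Y
  · rw [if_pos hXY, cft, Nat.card_eq_fintype_card, Fintype.card_subtype]
    refine Finset.card_nbij' (fun f => f ∘ Fin.succ) (fun g => Fin.cons X g) ?_ ?_ ?_ ?_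
    · intro f hf
      simp only [Finset.mem_coe, Finset.mem_filter, Finset.mem_univ, true_and] at hf ⊢
      obtain ⟨⟨hmono, h0, hl⟩, h1'⟩ := hf
      refine ⟨hmono.comp Fin.strictMono_succ, ?_, ?_⟩
      · show f (Fin.succ 0) = Y
        rw [← fin_one_eq_succ_zero]; exact h1'
      · show f (Fin.succ (Fin.last i)) = ⊤
        rw [Fin.succ_last]; exact hl
    · intro g hg
      simp only [Finset.mem_coe, Finset.mem_filter, Finset.mem_univ, true_and] at hg ⊢
      obtain ⟨hmono, h0, hl⟩ := hg
      refine ⟨⟨?_, ?_, ?_⟩, ?_⟩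
      · rw [Fin.strictMono_iff_lt_succ]
        intro j
        refine Fin.cases ?_ (fun k => ?_) j
        · simp only [Fin.castSucc_zero, Fin.cons_zero, Fin.cons_succ, h0]
          exact hXY
        · rw [← Fin.succ_castSucc, Fin.cons_succ, Fin.cons_succ]
          exact hmono (Fin.castSucc_lt_succ (i := k))
      · exact Fin.cons_zero _ _
      · rw [← Fin.succ_last, Fin.cons_succ]; exact hl
      · rw [fin_one_eq_succ_zero i]
        simp only [Fin.cons_succ]
        exact h0
    · intro f hf
      simp only [Finset.mem_coe, Finset.mem_filter, Finset.mem_univ, true_and] at hf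
      show Fin.cons X (f ∘ Fin.succ) = f
      funext j
      refine Fin.cases ?_ (fun k => ?_) j
      · rw [Fin.cons_zero]; exact hf.1.2.1.symm
      · rw [Fin.cons_succ]; rfl
    · intro g hg
      show Fin.cons X g ∘ Fin.succ = g
      funext j
      rw [Function.comp_apply, Fin.cons_succ]
  · rw [if_neg hXY]
    refine Finset.card_eq_zero.mpr (Finset.filter_eq_empty_iff.mpr ?_)
    rintro f _ ⟨⟨hmono, h0, _⟩, h1'⟩
    exact hXY (h0 ▸ h1' ▸ hmono (zero_lt_one_fin i))

/-- Chains starting in an upward-closed (below top) set `T` and ending at `⊤`. -/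
lemma sum_cft_mem (T : Set (Subgroup G)) (hT1 : ∀ X ∈ T, X < ⊤)
    (hT2 : ∀ X ∈ T, ∀ Z, X ≤ Z → Z < ⊤ → Z ∈ T) (i : ℕ) :
    (∑ Y : Subgroup G, if Y ∈ T then cft G Y (i + 1) else 0) = chainCount G T i := by
  have hA : ∀ Y : Subgroup G, (if Y ∈ T then cft G Y (i + 1) else 0) =
      (Finset.univ.filter fun f : Fin (i + 2) → Subgroup G =>
        (StrictMono f ∧ f 0 ∈ T ∧ f (Fin.last (i + 1)) = ⊤) ∧ f 0 = Y).card := by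
    intro Y
    by_cases hY : Y ∈ T
    · rw [if_pos hY, cft, Nat.card_eq_fintype_card, Fintype.card_subtype]
      congr 1
      apply Finset.filter_congr
      intro f _
      constructor
      · rintro ⟨hmono, h0, hl⟩
        exact ⟨⟨hmono, h0 ▸ hY, hl⟩, h0⟩
      · rintro ⟨⟨hmono, _, hl⟩, h0⟩
        exact ⟨hmono, h0, hl⟩
    · rw [if_neg hY]
      symm
      refine Finset.card_eq_zero.mpr (Finset.filter_eq_empty_iff.mpr ?_)
      rintro f _ ⟨⟨_, hmem, _⟩, h0⟩
      exact hY (h0 ▸ hmem)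
  rw [Finset.sum_congr rfl fun Y _ => hA Y]
  have hB : ∀ Y : Subgroup G,
      (Finset.univ.filter fun f : Fin (i + 2) → Subgroup G =>
        (StrictMono f ∧ f 0 ∈ T ∧ f (Fin.last (i + 1)) = ⊤) ∧ f 0 = Y).card =
      ((Finset.univ.filter fun f : Fin (i + 2) → Subgroup G =>
        StrictMono f ∧ f 0 ∈ T ∧ f (Fin.last (i + 1)) = ⊤).filter fun f => f 0 = Y).card := by
    intro Y
    rw [Finset.filter_filter]
  rw [Finset.sum_congr rfl fun Y _ => hB Y]
  rw [← Finset.card_eq_sum_card_fiberwise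
    (f := fun f : Fin (i + 2) → Subgroup G => f 0) (t := Finset.univ)
    (fun _ _ => Finset.mem_univ _)]
  rw [chainCount, Nat.card_eq_fintype_card, Fintype.card_subtype]
  refine Finset.card_nbij' (fun f => f ∘ Fin.castSucc) (fun g => Fin.snoc g ⊤) ?_ ?_ ?_ ?_
  · intro f hf
    simp only [Finset.mem_coe, Finset.mem_filter, Finset.mem_univ, true_and] at hf ⊢
    obtain ⟨hmono, h0, hl⟩ := hf
    refine ⟨hmono.comp Fin.strictMono_castSucc, fun j => ?_⟩
    refine hT2 _ h0 _ (hmono.monotone (Fin.zero_le _)) ?_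
    rw [Function.comp_apply]
    exact hl ▸ hmono (Fin.castSucc_lt_last j)
  · intro g hg
    simp only [Finset.mem_coe, Finset.mem_filter, Finset.mem_univ, true_and] at hg ⊢
    obtain ⟨hmono, hmem⟩ := hg
    refine ⟨?_, ?_, ?_⟩
    · rw [Fin.strictMono_iff_lt_succ]
      intro j
      refine Fin.lastCases ?_ (fun k => ?_) j
      · rw [Fin.succ_last, Fin.snoc_castSucc, Fin.snoc_last]
        exact hT1 _ (hmem _)
      · rw [Fin.succ_castSucc, Fin.snoc_castSucc, Fin.snoc_castSucc]
        exact hmono (Fin.castSucc_lt_succ (i := k))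
    · rw [show (0 : Fin (i + 2)) = Fin.castSucc 0 from (Fin.castSucc_zero).symm,
        Fin.snoc_castSucc]
      exact hmem 0
    · exact Fin.snoc_last _ _
  · intro f hf
    simp only [Finset.mem_coe, Finset.mem_filter, Finset.mem_univ, true_and] at hf
    show Fin.snoc (f ∘ Fin.castSucc) ⊤ = f
    funext j
    refine Fin.lastCases ?_ (fun k => ?_) j
    · rw [Fin.snoc_last]; exact hf.2.2.symm
    · rw [Fin.snoc_castSucc]; rfl
  · intro g hg
    show Fin.snoc g ⊤ ∘ Fin.castSucc = g
    funext j
    rw [Function.comp_apply, Fin.snoc_castSucc]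

/-- Hall's chain-sum vector. -/
noncomputable def hallV (X : Subgroup G) : ℚ :=
  ∑ i ∈ Finset.range (Fintype.card (Subgroup G) + 1), (-1 : ℚ) ^ i * cft G X i

lemma hall_top : hallV G ⊤ = 1 := by
  rw [hallV, Finset.sum_range_succ']
  have h : ∀ i : ℕ, cft G (⊤ : Subgroup G) (i + 1) = 0 := by
    intro i
    rw [cft_succ]
    refine Finset.sum_eq_zero fun Y _ => ?_
    rw [if_neg (not_top_lt)]
  simp [h, cft_zero]

lemma hall_rec (X : Subgroup G) :
    (∑ Y : Subgroup G, if X ≤ Y then hallV G Y else 0) = if X = ⊤ then 1 else 0 := by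
  rcases eq_or_ne X ⊤ with rfl | hX
  · rw [if_pos rfl]
    have h : ∀ Y : Subgroup G, (if (⊤ : Subgroup G) ≤ Y then hallV G Y else 0) =
        if Y = ⊤ then hallV G Y else 0 := by
      intro Y
      by_cases hY : Y = ⊤ <;> simp [hY, top_le_iff]
    rw [Finset.sum_congr rfl fun Y _ => h Y, Finset.sum_ite_eq' Finset.univ ⊤ (hallV G)]
    simp [hall_top]
  · rw [if_neg hX]
    have hsplit : ∀ Y : Subgroup G, (if X ≤ Y then hallV G Y else 0) =
        (if X = Y then hallV G Y else 0) + (if X < Y then hallV G Y else 0) := by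
      intro Y
      by_cases h1 : X = Y
      · simp [h1, lt_irrefl]
      · by_cases h2 : X < Y
        · rw [if_pos h2.le, if_neg h1, if_pos h2, zero_add]
        · rw [if_neg h1, if_neg h2, if_neg fun hle => h2 (lt_of_le_of_ne hle h1), add_zero]
    rw [Finset.sum_congr rfl fun Y _ => hsplit Y, Finset.sum_add_distrib,
      Finset.sum_ite_eq Finset.univ X (hallV G), if_pos (Finset.mem_univ X)]
    have hswap : (∑ Y : Subgroup G, if X < Y then hallV G Y else 0) =
        ∑ i ∈ Finset.range (Fintype.card (Subgroup G) + 1),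
          (-1 : ℚ) ^ i * cft G X (i + 1) := by
      have h1 : ∀ Y : Subgroup G, (if X < Y then hallV G Y else 0) =
          ∑ i ∈ Finset.range (Fintype.card (Subgroup G) + 1),
            (-1 : ℚ) ^ i * (if X < Y then (cft G Y i : ℚ) else 0) := by
        intro Y
        by_cases hY : X < Y <;> simp [hY, hallV]
      rw [Finset.sum_congr rfl fun Y _ => h1 Y, Finset.sum_comm]
      refine Finset.sum_congr rfl fun i _ => ?_
      rw [← Finset.mul_sum]
      congr 1
      rw [cft_succ, Nat.cast_sum]
      refine Finset.sum_congr rfl fun Y _ => ?_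
      rw [Nat.cast_ite, Nat.cast_zero]
    rw [hswap]
    have hlast : cft G X (Fintype.card (Subgroup G) + 1) = 0 :=
      cft_eq_zero G (by omega)
    rw [Finset.sum_range_succ, hlast]
    have hhall : hallV G X =
        ∑ i ∈ Finset.range (Fintype.card (Subgroup G)), (-1 : ℚ) ^ (i + 1) * cft G X (i + 1) := by
      rw [hallV, Finset.sum_range_succ', cft_zero, if_neg hX]
      simp
    rw [hhall]
    have : ∀ i : ℕ, (-1 : ℚ) ^ (i + 1) * cft G X (i + 1) = -((-1 : ℚ) ^ i * cft G X (i + 1)) := by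
      intro i; ring
    rw [Finset.sum_congr rfl fun i _ => this i, Finset.sum_neg_distrib]
    ring

lemma mu_eq_hall (Y : Subgroup G) : subgroupMu G Y ⊤ = hallV G Y := by
  have h1 : (zeta G).mulVec (fun Y => subgroupMu G Y ⊤) =
      fun X : Subgroup G => if X = ⊤ then (1 : ℚ) else 0 := by
    funext X
    have := mu_rec G X
    simpa [Matrix.mulVec, dotProduct, zeta, ite_mul, one_mul, zero_mul] using this
  have h2 : (zeta G).mulVec (hallV G) =
      fun X : Subgroup G => if X = ⊤ then (1 : ℚ) else 0 := by
    funext X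
    have := hall_rec G X
    simpa [Matrix.mulVec, dotProduct, zeta, ite_mul, one_mul, zero_mul] using this
  have h3 := h1.trans h2.symm
  have h4 := congrArg (fun v => ((zeta G)⁻¹).mulVec v) h3
  simp only [Matrix.mulVec_mulVec, Matrix.nonsing_inv_mul _ (isUnit_zeta_det G),
    Matrix.one_mulVec] at h4
  exact congrFun h4 Y

lemma mu_top_top : subgroupMu G ⊤ ⊤ = 1 := by
  rw [mu_eq_hall, hall_top]

lemma eulerChar_eq (T : Set (Subgroup G)) :
    eulerChar G T = ∑ i ∈ Finset.range (Fintype.card (Subgroup G)),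
      (-1 : ℚ) ^ i * (chainCount G T i : ℚ) := by
  rw [eulerChar]
  apply finsum_eq_sum_of_support_subset
  intro i hi
  simp only [Function.mem_support] at hi
  simp only [Finset.coe_range, Set.mem_Iio]
  by_contra hlt
  push_neg at hlt
  rw [chainCount_eq_zero G (by omega)] at hi
  simp at hi

lemma sum_mu_mem (T : Set (Subgroup G)) (hT1 : ∀ X ∈ T, X < ⊤)
    (hT2 : ∀ X ∈ T, ∀ Z, X ≤ Z → Z < ⊤ → Z ∈ T) :
    (∑ Y : Subgroup G, if Y ∈ T then subgroupMu G Y ⊤ else 0) = -eulerChar G T := by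
  have h1 : ∀ Y : Subgroup G, (if Y ∈ T then subgroupMu G Y ⊤ else 0) =
      ∑ i ∈ Finset.range (Fintype.card (Subgroup G) + 1),
        (-1 : ℚ) ^ i * (if Y ∈ T then (cft G Y i : ℚ) else 0) := by
    intro Y
    by_cases hY : Y ∈ T <;> simp [hY, mu_eq_hall, hallV]
  rw [Finset.sum_congr rfl fun Y _ => h1 Y, Finset.sum_comm]
  have h2 : ∀ i : ℕ, (∑ Y : Subgroup G, (-1 : ℚ) ^ i * (if Y ∈ T then (cft G Y i : ℚ) else 0)) =
      (-1 : ℚ) ^ i * ∑ Y : Subgroup G, (if Y ∈ T then (cft G Y i : ℚ) else 0) := by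
    intro i; rw [Finset.mul_sum]
  rw [Finset.sum_congr rfl fun i _ => h2 i, Finset.sum_range_succ']
  have h0 : (∑ Y : Subgroup G, if Y ∈ T then (cft G Y 0 : ℚ) else 0) = 0 := by
    refine Finset.sum_eq_zero fun Y _ => ?_
    by_cases hY : Y ∈ T
    · rw [if_pos hY, cft_zero, if_neg (hT1 Y hY).ne]
      simp
    · rw [if_neg hY]
  rw [h0, mul_zero, add_zero]
  have h3 : ∀ i : ℕ, (∑ Y : Subgroup G, if Y ∈ T then (cft G Y (i + 1) : ℚ) else 0) =
      (chainCount G T i : ℚ) := by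
    intro i
    rw [← sum_cft_mem G T hT1 hT2 i, Nat.cast_sum]
    refine Finset.sum_congr rfl fun Y _ => ?_
    rw [Nat.cast_ite, Nat.cast_zero]
  rw [eulerChar_eq, ← Finset.sum_neg_distrib]
  refine Finset.sum_congr rfl fun i _ => ?_
  rw [h3 i]
  ring

lemma key_per_C (N : Subgroup G) (hN : N ≠ ⊤) (C : Subgroup G) (hC : C ≤ N) :
    (∑ X : Subgroup G, if C ≤ X ∧ X ≤ N then subgroupMu G X ⊤ else 0) =
      reducedEulerChar G {X : Subgroup G | C ≤ X ∧ X < ⊤ ∧ ¬ X ≤ N} := by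
  obtain ⟨T, hTdef⟩ : ∃ T : Set (Subgroup G), {X : Subgroup G | C ≤ X ∧ X < ⊤ ∧ ¬ X ≤ N} = T :=
    ⟨_, rfl⟩
  rw [hTdef]
  have hT1 : ∀ X ∈ T, X < ⊤ := by
    intro X hX
    rw [← hTdef] at hX
    exact hX.2.1
  have hT2 : ∀ X ∈ T, ∀ Z, X ≤ Z → Z < ⊤ → Z ∈ T := by
    intro X hX Z hXZ hZtop
    rw [← hTdef] at hX ⊢
    obtain ⟨hCX, -, hXN⟩ := hX
    exact ⟨hCX.trans hXZ, hZtop, fun hZN => hXN (hXZ.trans hZN)⟩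
  have hCtop : C ≠ ⊤ := by
    rintro rfl
    exact hN (top_le_iff.mp hC)
  have hrec := mu_rec G C
  rw [if_neg hCtop] at hrec
  have hsplit : ∀ Y : Subgroup G, (if C ≤ Y then subgroupMu G Y ⊤ else 0) =
      (if C ≤ Y ∧ Y ≤ N then subgroupMu G Y ⊤ else 0) +
      (if Y ∈ T then subgroupMu G Y ⊤ else 0) +
      (if Y = ⊤ then subgroupMu G Y ⊤ else 0) := by
    intro Y
    by_cases hCY : C ≤ Y
    · by_cases hYN : Y ≤ N
      · have hYtop : Y ≠ ⊤ := fun h => hN (top_le_iff.mp (h ▸ hYN))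
        have hYT : Y ∉ T := fun h => (hTdef ▸ h : Y ∈ {X : Subgroup G | C ≤ X ∧ X < ⊤ ∧ ¬ X ≤ N}).2.2 hYN
        simp [hCY, hYN, hYT, hYtop]
      · by_cases hYtop : Y = ⊤
        · subst hYtop
          have hNtop : ¬ (⊤ : Subgroup G) ≤ N := fun h => hN (top_le_iff.mp h)
          have hYT : (⊤ : Subgroup G) ∉ T := fun h =>
            absurd (hTdef ▸ h : (⊤ : Subgroup G) ∈ {X : Subgroup G | C ≤ X ∧ X < ⊤ ∧ ¬ X ≤ N}).2.1
              (lt_irrefl _)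
          simp [hCY, hNtop, hYT]
        · have hYT : Y ∈ T := hTdef ▸ (⟨hCY, lt_of_le_of_ne le_top hYtop, hYN⟩ :
            Y ∈ {X : Subgroup G | C ≤ X ∧ X < ⊤ ∧ ¬ X ≤ N})
          simp [hCY, hYN, hYT, hYtop]
    · have hYT : Y ∉ T := fun h =>
        hCY (hTdef ▸ h : Y ∈ {X : Subgroup G | C ≤ X ∧ X < ⊤ ∧ ¬ X ≤ N}).1
      have hYtop : Y ≠ ⊤ := fun h => hCY (h ▸ le_top)
      have : ¬ (C ≤ Y ∧ Y ≤ N) := fun h => hCY h.1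
      simp [hCY, hYT, hYtop, this]
  rw [Finset.sum_congr rfl fun Y _ => hsplit Y, Finset.sum_add_distrib,
    Finset.sum_add_distrib] at hrec
  have hs2 := sum_mu_mem G T hT1 hT2
  have hs3 : (∑ Y : Subgroup G, if Y = ⊤ then subgroupMu G Y ⊤ else 0) = 1 := by
    rw [Fintype.sum_ite_eq' (⊤ : Subgroup G) (fun Y => subgroupMu G Y ⊤), mu_top_top]
  rw [reducedEulerChar]
  linarith [hrec, hs2, hs3]

lemma isCyclic_zpowers (g : G) : IsCyclic ↥(Subgroup.zpowers g) := by
  refine ⟨⟨⟨g, Subgroup.mem_zpowers g⟩, ?_⟩⟩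
  rintro ⟨x, k, hk⟩
  exact ⟨k, Subtype.ext (by simpa using hk)⟩

lemma card_eq_sum_totient (X : Subgroup G) :
    (Nat.card X) = ∑ C : Subgroup G,
      if C ≤ X ∧ IsCyclic ↥C then Nat.totient (Nat.card C) else 0 := by
  have : Fintype G := Fintype.ofFinite _
  have h1 : Nat.card X = (Finset.univ.filter fun g : G => g ∈ X).card := by
    rw [Nat.card_eq_fintype_card, Fintype.card_subtype]
  rw [h1, Finset.card_eq_sum_card_fiberwise
    (f := fun g : G => Subgroup.zpowers g) (t := Finset.univ) (fun _ _ => Finset.mem_univ _)]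
  refine Finset.sum_congr rfl fun C _ => ?_
  by_cases hC : C ≤ X ∧ IsCyclic ↥C
  · rw [if_pos hC]
    obtain ⟨hCX, hCyc⟩ := hC
    have hfil : (Finset.univ.filter fun g : G => g ∈ X ∧ Subgroup.zpowers g = C) =
        Finset.univ.filter fun g : G => Subgroup.zpowers g = C := by
      apply Finset.filter_congr
      intro g _
      constructor
      · rintro ⟨_, h⟩; exact h
      · intro h
        exact ⟨hCX (h ▸ Subgroup.mem_zpowers g), h⟩
    rw [Finset.filter_filter, hfil]
    have : Fintype ↥C := Fintype.ofFinite _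
    have heq : (Finset.univ.filter fun g : G => Subgroup.zpowers g = C).card =
        (Finset.univ.filter fun c : ↥C => orderOf c = Nat.card C).card := by
      refine Finset.card_nbij' (fun g => if h : g ∈ C then (⟨g, h⟩ : ↥C) else 1)
        (fun c => (c : G)) ?_ ?_ ?_ ?_
      · intro g hg
        simp only [Finset.mem_coe, Finset.mem_filter, Finset.mem_univ, true_and] at hg ⊢
        have hgC : g ∈ C := hg ▸ Subgroup.mem_zpowers g
        rw [dif_pos hgC]
        rw [Subgroup.orderOf_mk, ← Nat.card_zpowers, hg]
      · intro c hc
        simp only [Finset.mem_coe, Finset.mem_filter, Finset.mem_univ, true_and] at hc ⊢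
        have hle : Subgroup.zpowers (c : G) ≤ C := Subgroup.zpowers_le.mpr c.2
        refine Subgroup.eq_of_le_of_card_ge hle ?_
        rw [Nat.card_zpowers, Subgroup.orderOf_coe, hc]
      · intro g hg
        simp only [Finset.mem_coe, Finset.mem_filter, Finset.mem_univ, true_and] at hg
        have hgC : g ∈ C := hg ▸ Subgroup.mem_zpowers g
        show (((if h : g ∈ C then (⟨g, h⟩ : ↥C) else 1) : ↥C) : G) = g
        rw [dif_pos hgC]
      · intro c hc
        show (if h : (c : G) ∈ C then (⟨(c : G), h⟩ : ↥C) else 1) = c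
        rw [dif_pos c.2]
    rw [heq]
    have hcard : Nat.card ↥C = Fintype.card ↥C := Nat.card_eq_fintype_card
    rw [hcard]
    exact IsCyclic.card_orderOf_eq_totient dvd_rfl
  · rw [if_neg hC, Finset.filter_filter]
    refine Finset.card_eq_zero.mpr (Finset.filter_eq_empty_iff.mpr ?_)
    rintro g _
    rintro ⟨hgX, hgC⟩
    refine hC ⟨hgC ▸ Subgroup.zpowers_le.mpr hgX, ?_⟩
    rw [← hgC]
    exact isCyclic_zpowers G g

end MprimeAux

/-- For a finite group `G` and a proper subgroup `N`,
`M'_{G,N} = Σ_{C ≤ N, C cyclic} χ̃(T_C(G,N)) · φ(|C|)`, where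
`T_C(G,N) = {X | C ≤ X < G, X ≰ N}`. -/
theorem Mprime_eq_sum_reducedEulerChar (G : Type*) [Group G] [Finite G]
    (N : Subgroup G) (hN : N ≠ ⊤) :
    Mprime G N =
      ∑ C : Subgroup G,
        if C ≤ N ∧ IsCyclic ↥C then
          reducedEulerChar G {X : Subgroup G | C ≤ X ∧ X < ⊤ ∧ ¬ X ≤ N} *
            (Nat.totient (Nat.card C) : ℚ)
        else 0 := by
  rw [Mprime]
  have h1 : ∀ X : Subgroup G, (if X ≤ N then (Nat.card X : ℚ) * subgroupMu G X ⊤ else 0) =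
      ∑ C : Subgroup G, if X ≤ N then
        (if C ≤ X ∧ IsCyclic ↥C then (Nat.totient (Nat.card C) : ℚ) else 0) *
          subgroupMu G X ⊤ else 0 := by
    intro X
    by_cases hX : X ≤ N
    · simp only [if_pos hX]
      rw [← Finset.sum_mul]
      congr 1
      rw [MprimeAux.card_eq_sum_totient G X, Nat.cast_sum]
      refine Finset.sum_congr rfl fun C _ => ?_
      rw [Nat.cast_ite, Nat.cast_zero]
    · simp [hX]
  rw [Finset.sum_congr rfl fun X _ => h1 X, Finset.sum_comm]
  refine Finset.sum_congr rfl fun C _ => ?_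
  by_cases hCyc : IsCyclic ↥C
  · by_cases hCN : C ≤ N
    · rw [if_pos ⟨hCN, hCyc⟩]
      have h2 : ∀ X : Subgroup G, (if X ≤ N then
          (if C ≤ X ∧ IsCyclic ↥C then (Nat.totient (Nat.card C) : ℚ) else 0) *
            subgroupMu G X ⊤ else 0) =
          (Nat.totient (Nat.card C) : ℚ) *
            (if C ≤ X ∧ X ≤ N then subgroupMu G X ⊤ else 0) := by
        intro X
        by_cases hXN : X ≤ N
        · by_cases hCX : C ≤ X
          · rw [if_pos hXN, if_pos ⟨hCX, hCyc⟩, if_pos ⟨hCX, hXN⟩, mul_comm]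
          · have hc1 : ¬ (C ≤ X ∧ IsCyclic ↥C) := fun h => hCX h.1
            have hc2 : ¬ (C ≤ X ∧ X ≤ N) := fun h => hCX h.1
            rw [if_pos hXN, if_neg hc1, zero_mul, if_neg hc2, mul_zero]
        · have hc2 : ¬ (C ≤ X ∧ X ≤ N) := fun h => hXN h.2
          rw [if_neg hXN, if_neg hc2, mul_zero]
      rw [Finset.sum_congr rfl fun X _ => h2 X, ← Finset.mul_sum,
        MprimeAux.key_per_C G N hN C hCN, mul_comm]
    · rw [if_neg (fun h => hCN h.1)]
      refine Finset.sum_eq_zero fun X _ => ?_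
      by_cases hXN : X ≤ N
      · rw [if_pos hXN]
        have : ¬ (C ≤ X ∧ IsCyclic ↥C) := fun h => hCN (h.1.trans hXN)
        rw [if_neg this, zero_mul]
      · rw [if_neg hXN]
  · rw [if_neg (fun h => hCyc h.2)]
    refine Finset.sum_eq_zero fun X _ => ?_
    by_cases hXN : X ≤ N
    · rw [if_pos hXN, if_neg (fun h => hCyc h.2), zero_mul]
    · rw [if_neg hXN]
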